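/- Let α > 0, θ > 0 and β > 1/α, and let λ be gamma distributed with shape α and rate θ (density (θ^α/Γ(α)) x^{α−1} e^{−θ x} on (0, ∞)). Then for every t ∈ (0,1): (i) the gamma Kies mixture has complementary CDF ∫_0^∞ (θ^α/Γ(α)) x^{α−1} e^{−θ x} exp(−x (t/(1−t))^β) dx = (θ (1−t)^β / (θ (1−t)^β + t^β))^α, so that F(t) = 1 − (θ (1−t)^β / (θ (1−t)^β + t^β))^α; and (ii) F is differentiable at t with F′(t) = α θ^α β t^{β−1} (1−t)^{αβ−1} / (θ (1−t)^β + t^β)^{α+1}. -/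

import Mathlib

open MeasureTheory

private lemma gk_integrable {a r : ℝ} (ha : 0 < a) (hr : 0 < r) :
    IntegrableOn (fun x : ℝ => x ^ (a - 1) * Real.exp (-(r * x))) (Set.Ioi 0) := by
  have h := integrableOn_rpow_mul_exp_neg_mul_rpow (p := 1) (s := a - 1) (b := r)
    (by linarith) one_pos hr
  refine h.congr_fun (fun x hx => ?_) measurableSet_Ioi
  beta_reduce
  rw [Real.rpow_one, neg_mul]

private lemma gk_key {a θ r : ℝ} (ha : 0 < a) (hθ : 0 < θ) (hr : 0 < r) :
    ∫ x in Set.Ioi (0:ℝ), θ ^ a / Real.Gamma a * x ^ (a - 1) * Real.exp (-r * x)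
      = (θ / r) ^ a := by
  simp_rw [neg_mul, mul_assoc]
  rw [integral_const_mul, Real.integral_rpow_mul_exp_neg_mul_Ioi ha hr]
  rw [Real.div_rpow hθ.le hr.le, Real.div_rpow (by norm_num) hr.le, Real.one_rpow]
  have hΓ : Real.Gamma a ≠ 0 := (Real.Gamma_pos_of_pos ha).ne'
  field_simp

theorem gamma_kies_mixture
    (α θ β : ℝ) (hα : 0 < α) (hθ : 0 < θ) (hβ : 1 / α < β) (F : ℝ → ℝ)
    (hF : ∀ t, F t = ∫ x in Set.Ioi (0 : ℝ),
        θ ^ α / Real.Gamma α * x ^ (α - 1) * Real.exp (-θ * x) *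
          (1 - Real.exp (-x * (t / (1 - t)) ^ β)))
    (t : ℝ) (ht : t ∈ Set.Ioo (0 : ℝ) 1) :
    (∫ x in Set.Ioi (0 : ℝ), θ ^ α / Real.Gamma α * x ^ (α - 1) * Real.exp (-θ * x) *
          Real.exp (-x * (t / (1 - t)) ^ β))
        = (θ * (1 - t) ^ β / (θ * (1 - t) ^ β + t ^ β)) ^ α ∧
    F t = 1 - (θ * (1 - t) ^ β / (θ * (1 - t) ^ β + t ^ β)) ^ α ∧
    HasDerivAt F
      (α * θ ^ α * β * t ^ (β - 1) * (1 - t) ^ (α * β - 1) /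
        (θ * (1 - t) ^ β + t ^ β) ^ (α + 1)) t := by
  have hβ0 : 0 < β := lt_trans (by positivity) hβ
  -- general claim for all s ∈ Ioo 0 1
  have main : ∀ s ∈ Set.Ioo (0:ℝ) 1,
      (∫ x in Set.Ioi (0 : ℝ), θ ^ α / Real.Gamma α * x ^ (α - 1) * Real.exp (-θ * x) *
          Real.exp (-x * (s / (1 - s)) ^ β))
        = (θ * (1 - s) ^ β / (θ * (1 - s) ^ β + s ^ β)) ^ α ∧
      F s = 1 - (θ * (1 - s) ^ β / (θ * (1 - s) ^ β + s ^ β)) ^ α := by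
    intro s hs
    obtain ⟨hs0, hs1⟩ := hs
    have h1s : 0 < 1 - s := by linarith
    set c : ℝ := (s / (1 - s)) ^ β with hc_def
    have hc : 0 < c := Real.rpow_pos_of_pos (div_pos hs0 h1s) β
    have hceq : c = s ^ β / (1 - s) ^ β := Real.div_rpow hs0.le h1s.le β
    have hbpos : 0 < (1 - s) ^ β := Real.rpow_pos_of_pos h1s β
    have hapos : 0 < s ^ β := Real.rpow_pos_of_pos hs0 β
    have hDpos : 0 < θ * (1 - s) ^ β + s ^ β := by positivity
    have hfrac : θ / (θ + c) = θ * (1 - s) ^ β / (θ * (1 - s) ^ β + s ^ β) := by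
      rw [hceq]
      rw [div_eq_div_iff (by positivity) hDpos.ne']
      field_simp
    have hexp : ∀ x : ℝ, θ ^ α / Real.Gamma α * x ^ (α - 1) * Real.exp (-θ * x) *
          Real.exp (-x * c)
        = θ ^ α / Real.Gamma α * x ^ (α - 1) * Real.exp (-(θ + c) * x) := by
      intro x
      rw [mul_assoc, ← Real.exp_add]
      congr 2
      ring
    have h1 : (∫ x in Set.Ioi (0 : ℝ), θ ^ α / Real.Gamma α * x ^ (α - 1) *
          Real.exp (-θ * x) * Real.exp (-x * c))
        = (θ * (1 - s) ^ β / (θ * (1 - s) ^ β + s ^ β)) ^ α := by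
      simp_rw [hexp]
      rw [gk_key hα hθ (by positivity), hfrac]
    refine ⟨h1, ?_⟩
    -- integrability of the two pieces
    have Ig : ∀ r : ℝ, 0 < r → IntegrableOn
        (fun x : ℝ => θ ^ α / Real.Gamma α * x ^ (α - 1) * Real.exp (-r * x))
        (Set.Ioi 0) := by
      intro r hr
      have h : IntegrableOn (fun x : ℝ => θ ^ α / Real.Gamma α * (x ^ (α - 1) * Real.exp (-(r * x)))) (Set.Ioi 0) :=
        (gk_integrable hα hr).const_mul (θ ^ α / Real.Gamma α)
      refine h.congr_fun (fun x hx => ?_) measurableSet_Ioi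
      simp only [neg_mul, mul_assoc]
    rw [hF s]
    have hsplit : ∀ x : ℝ, θ ^ α / Real.Gamma α * x ^ (α - 1) * Real.exp (-θ * x) *
          (1 - Real.exp (-x * c))
        = θ ^ α / Real.Gamma α * x ^ (α - 1) * Real.exp (-θ * x)
          - θ ^ α / Real.Gamma α * x ^ (α - 1) * Real.exp (-θ * x) * Real.exp (-x * c) := by
      intro x; ring
    simp_rw [← hc_def, hsplit]
    rw [integral_sub (Ig θ hθ)]
    · rw [gk_key hα hθ hθ, div_self hθ.ne', Real.one_rpow, h1]
    · have h := Ig (θ + c) (by positivity)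
      refine h.congr_fun (fun x hx => ?_) measurableSet_Ioi
      rw [hexp x]
  obtain ⟨h1, h2⟩ := main t ht
  refine ⟨h1, h2, ?_⟩
  -- derivative
  obtain ⟨ht0, ht1⟩ := ht
  have h1t : 0 < 1 - t := by linarith
  have hbpos : 0 < (1 - t) ^ β := Real.rpow_pos_of_pos h1t β
  have hapos : 0 < t ^ β := Real.rpow_pos_of_pos ht0 β
  have hDpos : 0 < θ * (1 - t) ^ β + t ^ β := by positivity
  have hQpos : 0 < θ * (1 - t) ^ β / (θ * (1 - t) ^ β + t ^ β) := by positivity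
  have hu : HasDerivAt (fun s : ℝ => (1 - s) ^ β) (β * (1 - t) ^ (β - 1) * (-1)) t :=
    (Real.hasDerivAt_rpow_const (x := 1 - t) (p := β) (Or.inl h1t.ne')).comp t
      ((hasDerivAt_id t).const_sub 1)
  have hv : HasDerivAt (fun s : ℝ => s ^ β) (β * t ^ (β - 1)) t :=
    Real.hasDerivAt_rpow_const (Or.inl ht0.ne')
  have hN := hu.const_mul θ
  have hD := hN.add hv
  have hQ := hN.div hD hDpos.ne'
  have hpow := (Real.hasDerivAt_rpow_const
      (x := θ * (1 - t) ^ β / (θ * (1 - t) ^ β + t ^ β)) (p := α) (Or.inl hQpos.ne')).comp t hQ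
  have hG := hpow.const_sub 1
  have hEq : F =ᶠ[nhds t] fun s => 1 - (θ * (1 - s) ^ β / (θ * (1 - s) ^ β + s ^ β)) ^ α := by
    filter_upwards [Ioo_mem_nhds ht0 ht1] with s hs
    exact (main s hs).2
  have hG' := hG.congr_of_eventuallyEq hEq
  convert hG' using 1
  · rfl
  · rfl
  -- value equality
  set c1 := (1 - t) ^ (β - 1) with hc1
  set t1 := t ^ (β - 1) with ht1'
  set D := θ * (1 - t) ^ β + t ^ β with hD'
  have eθ : θ ^ α = θ ^ (α - 1) * θ := by
    rw [← Real.rpow_add_one hθ.ne' (α - 1)]; norm_num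
  have eb : (1 - t) ^ β = c1 * (1 - t) := by
    rw [hc1, ← Real.rpow_add_one h1t.ne' (β - 1)]; norm_num
  have ea : t ^ β = t1 * t := by
    rw [ht1', ← Real.rpow_add_one ht0.ne' (β - 1)]; norm_num
  have eQ : (θ * (1 - t) ^ β / D) ^ (α - 1)
      = θ ^ (α - 1) * (1 - t) ^ (β * (α - 1)) / D ^ (α - 1) := by
    rw [Real.div_rpow (by positivity) hDpos.le _, Real.mul_rpow hθ.le hbpos.le,
      ← Real.rpow_mul h1t.le]
  have eD : D ^ (α + 1) = D ^ (α - 1) * D ^ 2 := by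
    rw [← Real.rpow_natCast D 2, ← Real.rpow_add hDpos]
    norm_num
    congr 1
    ring
  have e2 : (1 - t) ^ (α * β - 1) = (1 - t) ^ (β * (α - 1)) * c1 := by
    rw [hc1, ← Real.rpow_add h1t]
    congr 1; ring
  rw [eQ, eD, e2, eθ]
  have hbm : (1 - t) ^ (β * (α - 1)) > 0 := Real.rpow_pos_of_pos h1t _
  have hDm : D ^ (α - 1) > 0 := Real.rpow_pos_of_pos hDpos _
  have key : θ * (β * c1 * -1) * D - θ * (1 - t) ^ β * (θ * (β * c1 * -1) + β * t1)
      = -(θ * β * t1 * c1) := by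
    rw [hD', eb, ea]; ring
  rw [show ((fun y => θ * (1 - y) ^ β) + fun s : ℝ => s ^ β) t = D from rfl, key]
  field_simp
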